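/- For every r_obs > 0 and every k > 0, one has ∫₀^∞ [ erf( r_obs/(2√τ) ) − (r_obs/√(πτ))·exp(−r_obs²/(4τ)) ] · exp(−k·τ) dτ = 1/k − exp(−r_obs·√k)·( 1/k + r_obs/√k ). -/

import Mathlib

open Real MeasureTheory

/-- The error function `erf a = (2/√π) ∫₀^a exp(−b²) db`. -/
noncomputable def erf (a : ℝ) : ℝ := (2 / Real.sqrt π) * ∫ b in (0:ℝ)..a, Real.exp (-b^2)

open Filter Set Topology

lemma expsq_cont : Continuous (fun b : ℝ => Real.exp (-b^2)) := by continuity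

lemma erf_hasDerivAt (x : ℝ) : HasDerivAt erf (2 / Real.sqrt π * Real.exp (-x^2)) x := by
  have h : HasDerivAt (fun a => ∫ b in (0:ℝ)..a, Real.exp (-b^2)) (Real.exp (-x^2)) x :=
    (expsq_cont.integral_hasStrictDerivAt 0 x).hasDerivAt
  exact h.const_mul (2 / Real.sqrt π)

lemma erf_cont : Continuous erf :=
  continuous_iff_continuousAt.2 fun x => (erf_hasDerivAt x).continuousAt

lemma expsq_integrableOn : IntegrableOn (fun b : ℝ => Real.exp (-b^2)) (Ioi 0) := by
  simpa using (integrableOn_Ioi_exp_neg_mul_sq_iff (b := 1)).2 one_pos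

lemma erf_tendsto_atTop : Tendsto erf atTop (𝓝 1) := by
  have h := intervalIntegral_tendsto_integral_Ioi 0 expsq_integrableOn tendsto_id
  have hg : (∫ x in Ioi (0:ℝ), Real.exp (-x^2)) = Real.sqrt π / 2 := by
    simpa using integral_gaussian_Ioi 1
  have h2 := (h.const_mul (2 / Real.sqrt π))
  rw [hg] at h2
  have hπ : Real.sqrt π ≠ 0 := by positivity
  have h1 : (2/Real.sqrt π) * (Real.sqrt π/2) = 1 := by field_simp
  rw [h1] at h2
  exact h2.congr fun x => rfl


lemma erf_neg' (x : ℝ) : erf (-x) = - erf x := by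
  unfold erf
  rw [← mul_neg]
  congr 1
  have h := intervalIntegral.integral_comp_neg (a := (0:ℝ)) (b := x) (fun b => Real.exp (-b^2))
  simp only [neg_sq, neg_zero] at h
  rw [intervalIntegral.integral_symm, ← h]

lemma erf_nonneg_le_one {x : ℝ} (hx : 0 ≤ x) : 0 ≤ erf x ∧ erf x ≤ 1 := by
  have hπ : (0:ℝ) < Real.sqrt π := Real.sqrt_pos.2 pi_pos
  have h0 : (0:ℝ) ≤ ∫ b in (0:ℝ)..x, Real.exp (-b^2) := by
    apply intervalIntegral.integral_nonneg hx
    intro u _; positivity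
  have h1 : (∫ b in (0:ℝ)..x, Real.exp (-b^2)) ≤ Real.sqrt π / 2 := by
    rw [intervalIntegral.integral_of_le hx]
    have hm : (∫ b in Ioc (0:ℝ) x, Real.exp (-b^2)) ≤ ∫ b in Ioi (0:ℝ), Real.exp (-b^2) := by
      apply setIntegral_mono_set expsq_integrableOn
      · filter_upwards with u using by positivity
      · exact HasSubset.Subset.eventuallyLE Ioc_subset_Ioi_self
    have hg : (∫ b in Ioi (0:ℝ), Real.exp (-b^2)) = Real.sqrt π / 2 := by
      simpa using integral_gaussian_Ioi 1
    linarith [hm, hg ▸ hm]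
  constructor
  · unfold erf; positivity
  · unfold erf
    rw [div_mul_eq_mul_div, div_le_one hπ]
    linarith

lemma abs_erf_le_one (x : ℝ) : |erf x| ≤ 1 := by
  rcases le_or_gt 0 x with hx | hx
  · rw [abs_of_nonneg (erf_nonneg_le_one hx).1]; exact (erf_nonneg_le_one hx).2
  · rw [abs_of_nonpos, ← erf_neg']
    · exact (erf_nonneg_le_one (by linarith)).2
    · rw [← neg_nonneg, ← erf_neg']; exact (erf_nonneg_le_one (by linarith)).1

lemma erf_tendsto_atBot : Tendsto erf atBot (𝓝 (-1)) := by
  have h : Tendsto (fun x : ℝ => - erf (-x)) atBot (𝓝 (-1)) := by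
    exact ((erf_tendsto_atTop.comp tendsto_neg_atBot_atTop).neg)
  exact h.congr fun x => by rw [erf_neg', neg_neg]

noncomputable def Gaux (a k t : ℝ) : ℝ :=
  -(1/k) * Real.exp (-(k*t)) * erf (a/(2*Real.sqrt t))
  + (1/(2*k) - a/(2*Real.sqrt k)) *
      (Real.exp (a*Real.sqrt k) * erf (a/(2*Real.sqrt t) + Real.sqrt k * Real.sqrt t))
  + (1/(2*k) + a/(2*Real.sqrt k)) *
      (Real.exp (-(a*Real.sqrt k)) * erf (a/(2*Real.sqrt t) - Real.sqrt k * Real.sqrt t))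

lemma exp_ident (a k t : ℝ) (hk : 0 < k) (ht : 0 < t) :
    (-(a/(2*Real.sqrt t) + Real.sqrt k*Real.sqrt t)^2
      = -(a/(2*Real.sqrt t))^2 + (-(k*t) + -(a*Real.sqrt k)))
    ∧ (-(a/(2*Real.sqrt t) - Real.sqrt k*Real.sqrt t)^2
      = -(a/(2*Real.sqrt t))^2 + (-(k*t) + a*Real.sqrt k)) := by
  have hs2 : Real.sqrt t * Real.sqrt t = t := Real.mul_self_sqrt ht.le
  have hq2 : Real.sqrt k * Real.sqrt k = k := Real.mul_self_sqrt hk.le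
  have hs : Real.sqrt t ≠ 0 := by positivity
  have h1 : (a/(2*Real.sqrt t)) * (Real.sqrt k*Real.sqrt t) = a*Real.sqrt k/2 := by
    field_simp
  have h2 : (Real.sqrt k*Real.sqrt t)^2 = k*t := by rw [mul_pow, sq, sq, hs2, hq2]
  constructor
  · linear_combination (-2)*h1 - h2
  · linear_combination 2*h1 - h2

lemma Gaux_hasDerivAt (a k : ℝ) (ha : 0 < a) (hk : 0 < k) {t : ℝ} (ht : 0 < t) :
    HasDerivAt (Gaux a k)
      ((erf (a / (2 * Real.sqrt t)) - a / Real.sqrt (π*t) * Real.exp (-(a^2) / (4*t)))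
        * Real.exp (-(k*t))) t := by
  have hs0 : Real.sqrt t ≠ 0 := by positivity
  have hs2 : Real.sqrt t * Real.sqrt t = t := Real.mul_self_sqrt ht.le
  have hq2 : Real.sqrt k * Real.sqrt k = k := Real.mul_self_sqrt hk.le
  have hπ : Real.sqrt π ≠ 0 := by positivity
  set E := Real.exp (-(a/(2*Real.sqrt t))^2) with hE
  set F := Real.exp (-(k*t)) with hF
  set P := Real.exp (a*Real.sqrt k) with hP
  set Pm := Real.exp (-(a*Real.sqrt k)) with hPm
  have hPPm : P * Pm = 1 := by rw [hP, hPm, ← Real.exp_add]; simp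
  have hEp : Real.exp (-(a/(2*Real.sqrt t) + Real.sqrt k*Real.sqrt t)^2) = E * F * Pm := by
    rw [hE, hF, hPm, ← Real.exp_add, ← Real.exp_add, (exp_ident a k t hk ht).1]; ring_nf
  have hEm : Real.exp (-(a/(2*Real.sqrt t) - Real.sqrt k*Real.sqrt t)^2) = E * F * P := by
    rw [hE, hF, hP, ← Real.exp_add, ← Real.exp_add, (exp_ident a k t hk ht).2]; ring_nf
  have hsq : HasDerivAt Real.sqrt (1/(2*Real.sqrt t)) t := Real.hasDerivAt_sqrt ht.ne'
  -- derivative of inner functions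
  have hu0 : HasDerivAt (fun x => a/(2*Real.sqrt x)) (-(a/(4*t*Real.sqrt t))) t := by
    have h2s : HasDerivAt (fun x => 2*Real.sqrt x) (2*(1/(2*Real.sqrt t))) t := hsq.const_mul 2
    have := (hasDerivAt_const t a).div h2s (by positivity)
    refine this.congr_deriv (Eq.symm ?_)
    rw [mul_pow, Real.sq_sqrt ht.le]
    field_simp
    ring
  have hqs : HasDerivAt (fun x => Real.sqrt k*Real.sqrt x) (Real.sqrt k/(2*Real.sqrt t)) t := by
    have h := hsq.const_mul (Real.sqrt k); rwa [mul_one_div] at h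
  have hup : HasDerivAt (fun x => a/(2*Real.sqrt x) + Real.sqrt k*Real.sqrt x)
      (-(a/(4*t*Real.sqrt t)) + Real.sqrt k/(2*Real.sqrt t)) t := hu0.add hqs
  have hum : HasDerivAt (fun x => a/(2*Real.sqrt x) - Real.sqrt k*Real.sqrt x)
      (-(a/(4*t*Real.sqrt t)) - Real.sqrt k/(2*Real.sqrt t)) t := hu0.sub hqs
  -- erf compositions
  have herf0 : HasDerivAt (fun x => erf (a/(2*Real.sqrt x)))
      (2/Real.sqrt π * E * -(a/(4*t*Real.sqrt t))) t := by
    have := (erf_hasDerivAt (a/(2*Real.sqrt t))).comp t hu0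
    simp only [hE, mul_assoc] at this ⊢
    exact this
  have herfp : HasDerivAt (fun x => P * erf (a/(2*Real.sqrt x) + Real.sqrt k*Real.sqrt x))
      (2/Real.sqrt π * (E*F) * (-(a/(4*t*Real.sqrt t)) + Real.sqrt k/(2*Real.sqrt t))) t := by
    have h := ((erf_hasDerivAt _).comp t hup).const_mul P
    refine h.congr_deriv (Eq.symm ?_)
    rw [hEp]
    linear_combination (-(2/Real.sqrt π * (E*F) *
      (-(a/(4*t*Real.sqrt t)) + Real.sqrt k/(2*Real.sqrt t)))) * hPPm
  have herfm : HasDerivAt (fun x => Pm * erf (a/(2*Real.sqrt x) - Real.sqrt k*Real.sqrt x))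
      (2/Real.sqrt π * (E*F) * (-(a/(4*t*Real.sqrt t)) - Real.sqrt k/(2*Real.sqrt t))) t := by
    have h := ((erf_hasDerivAt _).comp t hum).const_mul Pm
    refine h.congr_deriv (Eq.symm ?_)
    rw [hEm]
    linear_combination (-(2/Real.sqrt π * (E*F) *
      (-(a/(4*t*Real.sqrt t)) - Real.sqrt k/(2*Real.sqrt t)))) * hPPm
  -- exponential factor
  have hexp : HasDerivAt (fun x => Real.exp (-(k*x))) (-k * F) t := by
    have h1 : HasDerivAt (fun x : ℝ => -(k*x)) (-k) t := by
      have h := ((hasDerivAt_id t).const_mul k).neg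
      simp only [mul_one] at h
      exact h
    simpa [hF, mul_comm] using h1.exp
  -- assemble
  have hterm1 : HasDerivAt (fun x => -(1/k) * Real.exp (-(k*x)) * erf (a/(2*Real.sqrt x)))
      ((-(1/k) * (-k * F)) * erf (a/(2*Real.sqrt t))
        + (-(1/k) * F) * (2/Real.sqrt π * E * -(a/(4*t*Real.sqrt t)))) t := by
    exact (hexp.const_mul (-(1/k))).mul herf0
  have htotal := (hterm1.add ((herfp.const_mul (1/(2*k) - a/(2*Real.sqrt k))).add
      (herfm.const_mul (1/(2*k) + a/(2*Real.sqrt k)))))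
  have hfun : (Gaux a k) = fun x => -(1/k) * Real.exp (-(k*x)) * erf (a/(2*Real.sqrt x))
      + ((1/(2*k) - a/(2*Real.sqrt k)) * (P * erf (a/(2*Real.sqrt x) + Real.sqrt k*Real.sqrt x))
        + (1/(2*k) + a/(2*Real.sqrt k)) * (Pm * erf (a/(2*Real.sqrt x) - Real.sqrt k*Real.sqrt x))) := by
    funext x; rw [Gaux]; ring
  rw [hfun]
  refine htotal.congr_deriv (Eq.symm ?_)
  rw [Real.sqrt_mul pi_pos.le, hF]
  have hE4 : Real.exp (-(a^2) / (4*t)) = E := by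
    rw [hE]; congr 1; rw [div_pow, mul_pow, Real.sq_sqrt ht.le]; norm_num [neg_div]
  rw [hE4]
  have hk0 : k ≠ 0 := hk.ne'
  have hqk0 : Real.sqrt k ≠ 0 := by positivity
  field_simp
  ring_nf

lemma sqrt_tendsto_atTop : Tendsto Real.sqrt atTop atTop := by
  refine tendsto_atTop_atTop.2 fun b => ⟨(max b 0)^2, fun x hx => ?_⟩
  calc b ≤ max b 0 := le_max_left _ _
    _ = Real.sqrt ((max b 0)^2) := (Real.sqrt_sq (le_max_right _ _)).symm
    _ ≤ Real.sqrt x := Real.sqrt_le_sqrt hx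

lemma sqrt_tendsto_zero_within : Tendsto Real.sqrt (𝓝[>] (0:ℝ)) (𝓝[>] 0) := by
  rw [tendsto_nhdsWithin_iff]
  constructor
  · have := (Real.continuous_sqrt.tendsto 0).mono_left (nhdsWithin_le_nhds (s := Ioi (0:ℝ)))
    simpa using this
  · filter_upwards [self_mem_nhdsWithin] with x hx
    exact Real.sqrt_pos.2 hx

lemma Gaux_tendsto_zero (a k : ℝ) (ha : 0 < a) (hk : 0 < k) :
    Tendsto (Gaux a k) (𝓝[>] (0:ℝ))
      (𝓝 (-(1/k) + (1/(2*k) - a/(2*Real.sqrt k)) * Real.exp (a*Real.sqrt k)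
        + (1/(2*k) + a/(2*Real.sqrt k)) * Real.exp (-(a*Real.sqrt k)))) := by
  have h2s : Tendsto (fun t => 2*Real.sqrt t) (𝓝[>] (0:ℝ)) (𝓝[>] 0) := by
    rw [tendsto_nhdsWithin_iff]
    refine ⟨?_, ?_⟩
    · have := (sqrt_tendsto_zero_within.mono_right nhdsWithin_le_nhds).const_mul 2
      simpa using this
    · filter_upwards [self_mem_nhdsWithin] with x hx
      have h0 : 0 < Real.sqrt x := Real.sqrt_pos.2 hx
      exact Set.mem_Ioi.2 (by positivity)
  have hu0 : Tendsto (fun t => a/(2*Real.sqrt t)) (𝓝[>] (0:ℝ)) atTop := by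
    have hinv : Tendsto (fun t => (2*Real.sqrt t)⁻¹) (𝓝[>] (0:ℝ)) atTop :=
      tendsto_inv_nhdsGT_zero.comp h2s
    have := hinv.const_mul_atTop ha
    exact this.congr fun t => by rw [div_eq_mul_inv]
  have hqs : Tendsto (fun t => Real.sqrt k*Real.sqrt t) (𝓝[>] (0:ℝ)) (𝓝 0) := by
    have := ((Real.continuous_sqrt.tendsto 0).mono_left
      (nhdsWithin_le_nhds (s := Ioi (0:ℝ)))).const_mul (Real.sqrt k)
    simpa using this
  have hup : Tendsto (fun t => a/(2*Real.sqrt t) + Real.sqrt k*Real.sqrt t) (𝓝[>] (0:ℝ)) atTop :=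
    hu0.atTop_add hqs
  have hum : Tendsto (fun t => a/(2*Real.sqrt t) - Real.sqrt k*Real.sqrt t) (𝓝[>] (0:ℝ)) atTop := by
    have := hu0.atTop_add hqs.neg
    exact this.congr fun t => by ring
  have hF : Tendsto (fun t => Real.exp (-(k*t))) (𝓝[>] (0:ℝ)) (𝓝 1) := by
    have : Continuous (fun t : ℝ => Real.exp (-(k*t))) := by continuity
    have := (this.tendsto 0).mono_left (nhdsWithin_le_nhds (s := Ioi (0:ℝ)))
    simpa using this
  have he0 : Tendsto (fun t => erf (a/(2*Real.sqrt t))) (𝓝[>] (0:ℝ)) (𝓝 1) :=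
    erf_tendsto_atTop.comp hu0
  have hep : Tendsto (fun t => erf (a/(2*Real.sqrt t) + Real.sqrt k*Real.sqrt t))
      (𝓝[>] (0:ℝ)) (𝓝 1) := erf_tendsto_atTop.comp hup
  have hem : Tendsto (fun t => erf (a/(2*Real.sqrt t) - Real.sqrt k*Real.sqrt t))
      (𝓝[>] (0:ℝ)) (𝓝 1) := erf_tendsto_atTop.comp hum
  have := (((hF.const_mul (-(1/k))).mul he0).add
    ((hep.const_mul (Real.exp (a*Real.sqrt k))).const_mul (1/(2*k) - a/(2*Real.sqrt k)))).add
    ((hem.const_mul (Real.exp (-(a*Real.sqrt k)))).const_mul (1/(2*k) + a/(2*Real.sqrt k)))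
  have heq : (Gaux a k) = fun t => -(1/k) * Real.exp (-(k*t)) * erf (a/(2*Real.sqrt t))
      + (1/(2*k) - a/(2*Real.sqrt k)) * (Real.exp (a*Real.sqrt k) * erf (a/(2*Real.sqrt t) + Real.sqrt k*Real.sqrt t))
      + (1/(2*k) + a/(2*Real.sqrt k)) * (Real.exp (-(a*Real.sqrt k)) * erf (a/(2*Real.sqrt t) - Real.sqrt k*Real.sqrt t)) := rfl
  rw [heq]
  convert this using 2
  ring

lemma Gaux_tendsto_atTop (a k : ℝ) (ha : 0 < a) (hk : 0 < k) :
    Tendsto (Gaux a k) atTop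
      (𝓝 ((1/(2*k) - a/(2*Real.sqrt k)) * Real.exp (a*Real.sqrt k)
        - (1/(2*k) + a/(2*Real.sqrt k)) * Real.exp (-(a*Real.sqrt k)))) := by
  have hqk : 0 < Real.sqrt k := Real.sqrt_pos.2 hk
  have h2s : Tendsto (fun t => 2*Real.sqrt t) atTop atTop :=
    sqrt_tendsto_atTop.const_mul_atTop two_pos
  have hu0 : Tendsto (fun t => a/(2*Real.sqrt t)) atTop (𝓝 0) :=
    tendsto_const_nhds.div_atTop h2s
  have hqs : Tendsto (fun t => Real.sqrt k*Real.sqrt t) atTop atTop :=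
    sqrt_tendsto_atTop.const_mul_atTop hqk
  have hup : Tendsto (fun t => a/(2*Real.sqrt t) + Real.sqrt k*Real.sqrt t) atTop atTop :=
    hu0.add_atTop hqs
  have hum : Tendsto (fun t => a/(2*Real.sqrt t) - Real.sqrt k*Real.sqrt t) atTop atBot := by
    have hnb : Tendsto (fun t => -(Real.sqrt k*Real.sqrt t)) atTop atBot :=
      tendsto_neg_atTop_atBot.comp hqs
    have := hu0.add_atBot hnb
    exact this.congr fun t => by ring
  have hF : Tendsto (fun t => Real.exp (-(k*t))) atTop (𝓝 0) := by
    have hkt : Tendsto (fun t : ℝ => -(k*t)) atTop atBot :=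
      tendsto_neg_atTop_atBot.comp (tendsto_id.const_mul_atTop hk)
    exact Real.tendsto_exp_atBot.comp hkt
  have he0 : Tendsto (fun t => erf (a/(2*Real.sqrt t))) atTop (𝓝 (erf 0)) :=
    (erf_cont.tendsto 0).comp hu0
  have hep : Tendsto (fun t => erf (a/(2*Real.sqrt t) + Real.sqrt k*Real.sqrt t))
      atTop (𝓝 1) := erf_tendsto_atTop.comp hup
  have hem : Tendsto (fun t => erf (a/(2*Real.sqrt t) - Real.sqrt k*Real.sqrt t))
      atTop (𝓝 (-1)) := erf_tendsto_atBot.comp hum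
  have := (((hF.const_mul (-(1/k))).mul he0).add
    ((hep.const_mul (Real.exp (a*Real.sqrt k))).const_mul (1/(2*k) - a/(2*Real.sqrt k)))).add
    ((hem.const_mul (Real.exp (-(a*Real.sqrt k)))).const_mul (1/(2*k) + a/(2*Real.sqrt k)))
  have heq : (Gaux a k) = fun t => -(1/k) * Real.exp (-(k*t)) * erf (a/(2*Real.sqrt t))
      + (1/(2*k) - a/(2*Real.sqrt k)) * (Real.exp (a*Real.sqrt k) * erf (a/(2*Real.sqrt t) + Real.sqrt k*Real.sqrt t))
      + (1/(2*k) + a/(2*Real.sqrt k)) * (Real.exp (-(a*Real.sqrt k)) * erf (a/(2*Real.sqrt t) - Real.sqrt k*Real.sqrt t)) := rfl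
  rw [heq]
  convert this using 2
  ring

lemma second_term_bound (a τ : ℝ) (ha : 0 < a) (hτ : 0 < τ) :
    0 ≤ a / Real.sqrt (π*τ) * Real.exp (-(a^2) / (4*τ)) ∧
      a / Real.sqrt (π*τ) * Real.exp (-(a^2) / (4*τ)) ≤ 1 := by
  have hsτ : 0 < Real.sqrt τ := Real.sqrt_pos.2 hτ
  have hsπτ : 0 < Real.sqrt (π*τ) := Real.sqrt_pos.2 (by positivity)
  constructor
  · positivity
  · set u := a / Real.sqrt τ with hu
    have hu0 : 0 < u := by positivity
    have hexparg : -(a^2) / (4*τ) = -(u^2/4) := by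
      rw [hu, div_pow, Real.sq_sqrt hτ.le]; ring
    have hππ : Real.sqrt τ ≤ Real.sqrt (π*τ) := by
      apply Real.sqrt_le_sqrt; nlinarith [pi_gt_three]
    have h1 : a / Real.sqrt (π*τ) ≤ u := by
      rw [hu]; exact div_le_div_of_nonneg_left ha.le hsτ hππ
    have h2 : u ≤ Real.exp (u^2/4) := by
      have := Real.add_one_le_exp (u^2/4)
      nlinarith [sq_nonneg (u/2 - 1)]
    calc a / Real.sqrt (π*τ) * Real.exp (-(a^2) / (4*τ))
        ≤ u * Real.exp (-(a^2) / (4*τ)) := by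
          apply mul_le_mul_of_nonneg_right h1 (Real.exp_nonneg _)
      _ = u * (Real.exp (u^2/4))⁻¹ := by rw [hexparg, Real.exp_neg]
      _ ≤ Real.exp (u^2/4) * (Real.exp (u^2/4))⁻¹ := by
          apply mul_le_mul_of_nonneg_right h2 (by positivity)
      _ = 1 := mul_inv_cancel₀ (Real.exp_ne_zero _)

lemma integrand_integrable (a k : ℝ) (ha : 0 < a) (hk : 0 < k) :
    IntegrableOn (fun τ =>
      (erf (a / (2 * Real.sqrt τ)) - a / Real.sqrt (π*τ) * Real.exp (-(a^2) / (4*τ)))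
        * Real.exp (-(k*τ))) (Ioi 0) := by
  have hg : IntegrableOn (fun τ => 2 * Real.exp (-(k*τ))) (Ioi (0:ℝ)) := by
    have h := (exp_neg_integrableOn_Ioi 0 hk).const_mul 2
    simp only [neg_mul] at h
    exact h
  apply Integrable.mono' hg
  · apply ContinuousOn.aestronglyMeasurable _ measurableSet_Ioi
    have hc1 : ContinuousOn (fun τ : ℝ => a / (2 * Real.sqrt τ)) (Ioi 0) := by
      apply ContinuousOn.div continuousOn_const
        (Real.continuous_sqrt.continuousOn.const_smul 2 |>.congr fun x _ => by simp [smul_eq_mul])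
      intro x hx
      have hx0 : (0:ℝ) < x := hx
      have : 0 < Real.sqrt x := Real.sqrt_pos.2 hx0
      positivity
    have hc2 : ContinuousOn (fun τ : ℝ => a / Real.sqrt (π*τ)) (Ioi 0) := by
      apply ContinuousOn.div continuousOn_const (by fun_prop)
      intro x hx
      have hx0 : (0:ℝ) < x := hx
      have : 0 < Real.sqrt (π*x) := Real.sqrt_pos.2 (by positivity)
      positivity
    have hc3 : ContinuousOn (fun τ : ℝ => Real.exp (-(a^2) / (4*τ))) (Ioi 0) := by
      apply Real.continuous_exp.comp_continuousOn
      apply ContinuousOn.div continuousOn_const (by fun_prop)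
      intro x hx
      have hx0 : (0:ℝ) < x := hx
      positivity
    exact (((erf_cont.comp_continuousOn hc1).sub (hc2.mul hc3)).mul
      (Continuous.continuousOn (by continuity)))
  · filter_upwards [MeasureTheory.ae_restrict_mem measurableSet_Ioi] with τ hτ
    have hτ0 : (0:ℝ) < τ := hτ
    have hb := second_term_bound a τ ha hτ0
    have he := abs_erf_le_one (a / (2 * Real.sqrt τ))
    rw [Real.norm_eq_abs, abs_mul, Real.abs_exp]
    have : |erf (a / (2 * Real.sqrt τ)) - a / Real.sqrt (π*τ) * Real.exp (-(a^2) / (4*τ))| ≤ 2 := by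
      have := abs_sub_abs_le_abs_sub (erf (a / (2 * Real.sqrt τ))) (a / Real.sqrt (π*τ) * Real.exp (-(a^2) / (4*τ)))
      have h2 : |a / Real.sqrt (π*τ) * Real.exp (-(a^2) / (4*τ))| ≤ 1 := by
        rw [abs_of_nonneg hb.1]; exact hb.2
      calc |erf (a / (2 * Real.sqrt τ)) - a / Real.sqrt (π*τ) * Real.exp (-(a^2) / (4*τ))|
          ≤ |erf (a / (2 * Real.sqrt τ))| + |a / Real.sqrt (π*τ) * Real.exp (-(a^2) / (4*τ))| := by
            rw [sub_eq_add_neg]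
            exact (abs_add_le _ _).trans (by rw [abs_neg])
        _ ≤ 1 + 1 := add_le_add he h2
        _ = 2 := by norm_num
    calc |erf (a / (2 * Real.sqrt τ)) - a / Real.sqrt (π*τ) * Real.exp (-(a^2) / (4*τ))| * Real.exp (-(k*τ))
        ≤ 2 * Real.exp (-(k*τ)) := mul_le_mul_of_nonneg_right this (Real.exp_nonneg _)


/-- The asymptotic impact of the worst-case noise source (located at the receiver),
with molecule degradation rate `k > 0` and no flow. -/
theorem asymptotic_impact_worst_case_with_degradation (r_obs k : ℝ)
    (hr : 0 < r_obs) (hk : 0 < k) :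
    ∫ τ in Set.Ioi (0:ℝ),
      (erf (r_obs / (2 * Real.sqrt τ))
        - (r_obs / Real.sqrt (π*τ)) * Real.exp (-(r_obs^2) / (4*τ)))
      * Real.exp (-(k*τ))
    = 1/k - Real.exp (-(r_obs * Real.sqrt k)) * (1/k + r_obs / Real.sqrt k) := by
  set a := r_obs with ha
  set L0 : ℝ := -(1/k) + (1/(2*k) - a/(2*Real.sqrt k)) * Real.exp (a*Real.sqrt k)
      + (1/(2*k) + a/(2*Real.sqrt k)) * Real.exp (-(a*Real.sqrt k)) with hL0
  set f : ℝ → ℝ := fun t => if t = 0 then L0 else Gaux a k t with hf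
  have hderiv : ∀ x ∈ Set.Ioi (0:ℝ), HasDerivAt f
      ((erf (a / (2 * Real.sqrt x)) - a / Real.sqrt (π*x) * Real.exp (-(a^2) / (4*x)))
        * Real.exp (-(k*x))) x := by
    intro x hx
    have hx0 : (0:ℝ) < x := hx
    apply (Gaux_hasDerivAt a k hr hk hx0).congr_of_eventuallyEq
    filter_upwards [isOpen_Ioi.mem_nhds hx] with y hy
    have : y ≠ 0 := ne_of_gt hy
    simp [hf, this]
  have hcont : ContinuousWithinAt f (Set.Ici 0) 0 := by
    rw [← Set.Ioi_insert, continuousWithinAt_insert_self]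
    have hf0 : f 0 = L0 := by simp [hf]
    unfold ContinuousWithinAt
    rw [hf0]
    apply (Gaux_tendsto_zero a k hr hk).congr'
    filter_upwards [self_mem_nhdsWithin] with y hy
    have : y ≠ 0 := ne_of_gt hy
    simp [hf, this]
  have htop : Tendsto f atTop
      (𝓝 ((1/(2*k) - a/(2*Real.sqrt k)) * Real.exp (a*Real.sqrt k)
        - (1/(2*k) + a/(2*Real.sqrt k)) * Real.exp (-(a*Real.sqrt k)))) := by
    apply (Gaux_tendsto_atTop a k hr hk).congr'
    filter_upwards [eventually_gt_atTop 0] with y hy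
    have : y ≠ 0 := ne_of_gt hy
    simp [hf, this]
  have hres := integral_Ioi_of_hasDerivAt_of_tendsto hcont hderiv
    (integrand_integrable a k hr hk) htop
  rw [hres]
  have hf0 : f 0 = L0 := by simp [hf]
  rw [hf0, hL0]
  ring
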